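/- For all integers k ≥ 5m with m ≥ 0 and k ≠ 0, the strong equitable vertex 3-arboricity of K_{4k,4k,4k} satisfies va₃≡(K_{4k,4k,4k}) ≤ 3k − 3m. -/

import Mathlib

open SimpleGraph

/-- `G` has an equitable `(t,k)`-tree-coloring: a map `f : V → Fin t` whose color
classes have sizes differing by at most 1, and each color class induces a forest
(each component a tree) of maximum degree at most `k`. -/
def EqTreeColorable {V : Type} [Fintype V] (G : SimpleGraph V) (t k : ℕ) : Prop :=
  ∃ f : V → Fin t,
    (∀ i j : Fin t, ({v | f v = i} : Set V).ncard ≤ ({v | f v = j} : Set V).ncard + 1) ∧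
    (∀ i : Fin t, (G.induce {v | f v = i}).IsAcyclic) ∧
    (∀ i : Fin t, ∀ v, ((G.induce {v | f v = i}).neighborSet v).ncard ≤ k)

/-- The strong equitable vertex `k`-arboricity: the least `t` such that `G` has an
equitable `(t',k)`-tree-coloring for every `t' ≥ t`. -/
noncomputable def vaStrong {V : Type} [Fintype V] (G : SimpleGraph V) (k : ℕ) : ℕ :=
  sInf {t | ∀ t', t ≤ t' → EqTreeColorable G t' k}

/-- The complete tripartite graph `K_{n,n,n}`. -/
def K3 (n : ℕ) : SimpleGraph (Σ _ : Fin 3, Fin n) :=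
  completeMultipartiteGraph (fun _ => Fin n)

open Finset

def cum (g : ℕ → ℕ) (c : ℕ) : ℕ := ∑ x ∈ Finset.range c, g x

lemma cum_mono (g : ℕ → ℕ) : Monotone (cum g) := fun _ _ hab =>
  Finset.sum_le_sum_of_subset (Finset.range_subset_range.2 hab)

lemma cum_succ (g : ℕ → ℕ) (c : ℕ) : cum g (c+1) = cum g c + g c :=
  Finset.sum_range_succ g c

noncomputable def loc (g : ℕ → ℕ) (j : ℕ) : ℕ := sInf {c | j < cum g (c+1)}

lemma loc_spec (g : ℕ → ℕ) (t j : ℕ) (h : j < cum g t) :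
    cum g (loc g j) ≤ j ∧ j < cum g (loc g j + 1) ∧ loc g j < t := by
  have ht : t ≠ 0 := by rintro rfl; simp [cum] at h
  have hne' : t - 1 + 1 = t := by omega
  have hne : (t-1) ∈ {c | j < cum g (c+1)} := by
    simp only [Set.mem_setOf_eq, hne']; exact h
  have hmem : j < cum g (loc g j + 1) := Nat.sInf_mem (Set.nonempty_of_mem hne)
  have hle : loc g j ≤ t - 1 := Nat.sInf_le hne
  refine ⟨?_, hmem, by omega⟩
  rcases Nat.eq_zero_or_pos (loc g j) with h0 | h0
  · rw [h0]; simp [cum]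
  · have hlt : loc g j - 1 < loc g j := by omega
    have h2 : loc g j - 1 ∉ {c | j < cum g (c+1)} := Nat.notMem_of_lt_sInf hlt
    simp only [Set.mem_setOf_eq, not_lt] at h2
    have h3 : loc g j - 1 + 1 = loc g j := by omega
    rw [h3] at h2; exact h2

lemma loc_eq (g : ℕ → ℕ) (j c : ℕ) (h1 : cum g c ≤ j) (h2 : j < cum g (c+1)) :
    loc g j = c := by
  have hub : loc g j ≤ c := Nat.sInf_le h2
  by_contra hne
  have hlt : loc g j < c := lt_of_le_of_ne hub hne
  have hmem : j < cum g (loc g j + 1) := Nat.sInf_mem (Set.nonempty_of_mem (show c ∈ {c | j < cum g (c+1)} from h2))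
  have hmono : cum g (loc g j + 1) ≤ cum g c := cum_mono g (by omega)
  omega

lemma card_fiber (g : ℕ → ℕ) (n t c : ℕ) (hn : cum g t = n) (hc : c < t) :
    (Finset.univ.filter fun j : Fin n => loc g (j:ℕ) = c).card = g c := by
  have hc1 : cum g (c+1) ≤ n := by rw [← hn]; exact cum_mono g (by omega)
  have key : (Finset.univ.filter fun j : Fin n => loc g (j:ℕ) = c)
      = (Finset.Ico (cum g c) (cum g (c+1))).attachFin
          (fun x hx => lt_of_lt_of_le (Finset.mem_Ico.1 hx).2 hc1) := by
    ext j
    simp only [Finset.mem_filter, Finset.mem_univ, true_and, Finset.mem_attachFin,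
      Finset.mem_Ico]
    constructor
    · rintro rfl
      have := loc_spec g t (j:ℕ) (by rw [hn]; exact j.2)
      exact ⟨this.1, this.2.1⟩
    · rintro ⟨h1, h2⟩
      exact loc_eq g (j:ℕ) c h1 h2
  rw [key, Finset.card_attachFin, Nat.card_Ico, cum_succ]
  omega

lemma card_filter_sigma {n : ℕ} (p : (Σ _ : Fin 3, Fin n) → Prop) [DecidablePred p] :
    (Finset.univ.filter p).card
      = ∑ i : Fin 3, (Finset.univ.filter fun j : Fin n => p ⟨i, j⟩).card := by
  have : Finset.univ.filter p
      = Finset.univ.sigma (fun i : Fin 3 => Finset.univ.filter fun j : Fin n => p ⟨i, j⟩) := by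
    ext ⟨i, j⟩
    simp [Finset.mem_sigma]
  rw [this, Finset.card_sigma]

lemma noedge_acyclic {V : Type*} (G : SimpleGraph V)
    (h : ∀ a b, ¬ G.Adj a b) : G.IsAcyclic := by
  intro v p hp
  cases p with
  | nil => exact hp.ne_nil rfl
  | cons h1 q => exact h _ _ h1

lemma star_acyclic {V : Type*} (G : SimpleGraph V) (v0 : V)
    (h : ∀ a b, G.Adj a b → a = v0 ∨ b = v0) : G.IsAcyclic := by
  intro v p hp
  cases p with
  | nil => exact hp.ne_nil rfl
  | cons h1 q1 =>
    rename_i x1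
    cases q1 with
    | nil => exact G.irrefl h1
    | cons h2 q2 =>
      rename_i x2
      cases q2 with
      | nil =>
        have := hp.1.1
        simp [Walk.isTrail_def] at this
      | cons h3 q =>
        rename_i x3
        have hnd := hp.2
        simp only [Walk.support_cons, List.tail_cons, List.nodup_cons] at hnd
        obtain ⟨hx1, hx2, hq⟩ := hnd
        have hvq : v ∈ q.support := Walk.end_mem_support q
        have hx3q : x3 ∈ q.support := Walk.start_mem_support q
        have e1 := h _ _ h1
        have e2 := h _ _ h2
        have e3 := h _ _ h3
        rcases e1 with rfl | rfl
        · rcases e2 with rfl | rfl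
          · exact hx1 (by simp [hvq])
          · exact hx2 hvq
        · rcases e3 with rfl | rfl
          · exact hx1 (by simp)
          · exact hx1 (by simp [hx3q])
def pfun : List (ℕ × (ℕ × ℕ × ℕ)) → ℕ → ℕ × ℕ × ℕ
  | [], _ => (0,0,0)
  | (len, v) :: rest, c => if c < len then v else pfun rest (c - len)

def lenSum (L : List (ℕ × (ℕ × ℕ × ℕ))) : ℕ := (L.map Prod.fst).sum

lemma sum_pfun (φ : ℕ × ℕ × ℕ → ℕ) :
    ∀ L : List (ℕ × (ℕ × ℕ × ℕ)),
      ∑ c ∈ Finset.range (lenSum L), φ (pfun L c)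
        = (L.map (fun p => p.1 * φ p.2)).sum
  | [] => by simp [lenSum, pfun]
  | (len, v) :: rest => by
      have hL : lenSum ((len, v) :: rest) = len + lenSum rest := by
        simp [lenSum]
      rw [hL, Finset.range_eq_Ico,
        ← Finset.sum_Ico_consecutive _ (Nat.zero_le len) (Nat.le_add_right len _)]
      have h1 : ∑ c ∈ Finset.Ico 0 len, φ (pfun ((len, v) :: rest) c) = len * φ v := by
        have he : ∀ c ∈ Finset.Ico 0 len, φ (pfun ((len, v) :: rest) c) = φ v := by
          intro c hc
          simp only [pfun]
          rw [if_pos (Finset.mem_Ico.1 hc).2]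
        rw [Finset.sum_congr rfl he]
        simp [mul_comm]
      have h2 : ∑ c ∈ Finset.Ico len (len + lenSum rest), φ (pfun ((len, v) :: rest) c)
          = ∑ c ∈ Finset.range (lenSum rest), φ (pfun rest c) := by
        rw [Finset.sum_Ico_eq_sum_range]
        apply Finset.sum_congr (by simp)
        intro c _
        simp only [pfun]
        rw [if_neg (by omega)]
        have he : len + c - len = c := by omega
        rw [he]
      rw [h1, h2, sum_pfun φ rest]
      simp

lemma pfun_mem : ∀ (L : List (ℕ × (ℕ × ℕ × ℕ))) (c : ℕ), c < lenSum L →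
      ∃ p ∈ L, p.1 ≠ 0 ∧ pfun L c = p.2
  | [], c, h => by simp [lenSum] at h
  | (len, v) :: rest, c, h => by
      by_cases hc : c < len
      · exact ⟨(len, v), by simp, by omega, by simp [pfun, hc]⟩
      · have hlt : c - len < lenSum rest := by
          simp only [lenSum, List.map_cons, List.sum_cons] at h
          simp only [lenSum]; omega
        obtain ⟨p, hp, hp1, hp2⟩ := pfun_mem rest (c - len) hlt
        exact ⟨p, by simp [hp], hp1, by simp [pfun, hc, hp2]⟩

def Good (p : ℕ × ℕ × ℕ) : Prop :=
  (p.2.1 = 0 ∧ p.2.2 = 0) ∨ (p.1 = 0 ∧ p.2.2 = 0) ∨ (p.1 = 0 ∧ p.2.1 = 0) ∨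
  (p.1 = 1 ∧ p.2.2 = 0 ∧ p.2.1 ≤ 3) ∨ (p.1 = 1 ∧ p.2.1 = 0 ∧ p.2.2 ≤ 3) ∨
  (p.2.1 = 1 ∧ p.2.2 = 0 ∧ p.1 ≤ 3) ∨ (p.2.1 = 1 ∧ p.1 = 0 ∧ p.2.2 ≤ 3) ∨
  (p.2.2 = 1 ∧ p.2.1 = 0 ∧ p.1 ≤ 3) ∨ (p.2.2 = 1 ∧ p.1 = 0 ∧ p.2.1 ≤ 3)

lemma good_sem (a b c : ℕ) (h : Good (a, b, c)) :
    (∃ i0 : Fin 3, ∀ i, i ≠ i0 → ![a,b,c] i = 0) ∨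
    (∃ i0 i1 : Fin 3, i0 ≠ i1 ∧ ![a,b,c] i0 = 1 ∧ ![a,b,c] i1 ≤ 3 ∧
      ∀ i, i ≠ i0 → i ≠ i1 → ![a,b,c] i = 0) := by
  simp only [Good] at h
  rcases h with ⟨h1, h2⟩ | ⟨h1, h2⟩ | ⟨h1, h2⟩ | ⟨h1, h2, h3⟩ | ⟨h1, h2, h3⟩ | ⟨h1, h2, h3⟩
    | ⟨h1, h2, h3⟩ | ⟨h1, h2, h3⟩ | ⟨h1, h2, h3⟩
  · exact Or.inl ⟨0, by intro i hi; fin_cases i <;> simp_all⟩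
  · exact Or.inl ⟨1, by intro i hi; fin_cases i <;> simp_all⟩
  · exact Or.inl ⟨2, by intro i hi; fin_cases i <;> simp_all⟩
  · exact Or.inr ⟨0, 1, by decide, by simpa using h1, by simpa using h3,
      by intro i hi hi'; fin_cases i <;> simp_all⟩
  · exact Or.inr ⟨0, 2, by decide, by simpa using h1, by simpa using h3,
      by intro i hi hi'; fin_cases i <;> simp_all⟩
  · exact Or.inr ⟨1, 0, by decide, by simpa using h1, by simpa using h3,
      by intro i hi hi'; fin_cases i <;> simp_all⟩
  · exact Or.inr ⟨1, 2, by decide, by simpa using h1, by simpa using h3,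
      by intro i hi hi'; fin_cases i <;> simp_all⟩
  · exact Or.inr ⟨2, 0, by decide, by simpa using h1, by simpa using h3,
      by intro i hi hi'; fin_cases i <;> simp_all⟩
  · exact Or.inr ⟨2, 1, by decide, by simpa using h1, by simpa using h3,
      by intro i hi hi'; fin_cases i <;> simp_all⟩
lemma loc_ne_of_zero (g : ℕ → ℕ) (t j c : ℕ) (hj : j < cum g t) (hz : g c = 0) :
    loc g j ≠ c := by
  rintro rfl
  have h1 := loc_spec g t j hj
  have h2 := cum_succ g (loc g j)
  omega

lemma lemA (k t : ℕ) (hk : 0 < k) (g : Fin 3 → ℕ → ℕ)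
    (hsum : ∀ i, cum (g i) t = 4*k)
    (hequit : ∀ c c', c < t → c' < t →
      g 0 c + g 1 c + g 2 c ≤ g 0 c' + g 1 c' + g 2 c' + 1)
    (hgood : ∀ c, c < t →
      (∃ i0 : Fin 3, ∀ i, i ≠ i0 → g i c = 0) ∨
      (∃ i0 i1 : Fin 3, i0 ≠ i1 ∧ g i0 c = 1 ∧ g i1 c ≤ 3 ∧
        ∀ i, i ≠ i0 → i ≠ i1 → g i c = 0)) :
    EqTreeColorable (K3 (4*k)) t 3 := by
  classical
  have hjlt : ∀ (i : Fin 3) (j : Fin (4*k)), (j : ℕ) < cum (g i) t := by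
    intro i j; rw [hsum]; exact j.2
  set f : (Σ _ : Fin 3, Fin (4*k)) → Fin t :=
    fun v => ⟨loc (g v.1) v.2, (loc_spec (g v.1) t v.2 (hjlt v.1 v.2)).2.2⟩ with hf
  have hmem : ∀ (v : (Σ _ : Fin 3, Fin (4*k))) (c : Fin t),
      f v = c ↔ loc (g v.1) v.2 = (c : ℕ) := by
    intro v c; simp [hf, Fin.ext_iff]
  have hfiber : ∀ c : Fin t,
      ({v | f v = c} : Set (Σ _ : Fin 3, Fin (4*k))).ncard
        = g 0 (c : ℕ) + g 1 (c : ℕ) + g 2 (c : ℕ) := by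
    intro c
    rw [Set.ncard_eq_toFinset_card', Set.toFinset_setOf,
      card_filter_sigma (n := 4*k) (fun v => f v = c)]
    have hpart : ∀ i : Fin 3,
        (univ.filter fun j : Fin (4*k) => f ⟨i,j⟩ = c).card = g i (c : ℕ) := by
      intro i
      have heq : (univ.filter fun j : Fin (4*k) => f ⟨i,j⟩ = c)
          = (univ.filter fun j : Fin (4*k) => loc (g i) (j : ℕ) = (c : ℕ)) := by
        ext j; simp [hmem ⟨i, j⟩ c]
      rw [heq, card_fiber (g i) (4*k) t (c : ℕ) (hsum i) c.2]
    rw [Fin.sum_univ_three, hpart 0, hpart 1, hpart 2]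
  have hzero : ∀ (v : (Σ _ : Fin 3, Fin (4*k))) (c : Fin t),
      g v.1 (c : ℕ) = 0 → f v ≠ c := by
    intro v c hz hc
    exact loc_ne_of_zero (g v.1) t v.2 (c : ℕ) (hjlt v.1 v.2) hz ((hmem v c).1 hc)
  have hstar : ∀ (c : Fin t) (i0 i1 : Fin 3), g i0 (c : ℕ) = 1 →
      (∀ i, i ≠ i0 → i ≠ i1 → g i (c : ℕ) = 0) →
      ∃ j0 : Fin (4*k), f ⟨i0, j0⟩ = c ∧
        ∀ v, f v = c → v = ⟨i0, j0⟩ ∨ v.1 = i1 := by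
    intro c i0 i1 h1 hz
    have hcard1 : (univ.filter fun j : Fin (4*k) => loc (g i0) (j : ℕ) = (c : ℕ)).card = 1 := by
      rw [card_fiber (g i0) (4*k) t (c : ℕ) (hsum i0) c.2]; exact h1
    obtain ⟨j0, hj0⟩ := Finset.card_eq_one.1 hcard1
    refine ⟨j0, ?_, ?_⟩
    · rw [hmem]
      have : j0 ∈ (univ.filter fun j : Fin (4*k) => loc (g i0) (j : ℕ) = (c : ℕ)) := by
        rw [hj0]; exact Finset.mem_singleton_self j0
      simpa using this
    · intro v hv
      obtain ⟨vi, vj⟩ := v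
      by_cases hvi : vi = i0
      · left
        subst hvi
        have h2 : vj ∈ (univ.filter fun j : Fin (4*k) => loc (g vi) (j : ℕ) = (c : ℕ)) := by
          simpa using (hmem ⟨vi, vj⟩ c).1 hv
        rw [hj0, Finset.mem_singleton] at h2
        subst h2; rfl
      · right
        by_contra hcon
        exact hzero ⟨vi, vj⟩ c (hz vi hvi hcon) hv
  have hS1 : ∀ (c : Fin t) (i1 : Fin 3),
      ({j : Fin (4*k) | loc (g i1) (j : ℕ) = (c : ℕ)} : Set (Fin (4*k))).ncard
        = g i1 (c : ℕ) := by
    intro c i1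
    rw [Set.ncard_eq_toFinset_card', Set.toFinset_setOf,
      card_fiber (g i1) (4*k) t (c : ℕ) (hsum i1) c.2]
  refine ⟨f, ?_, ?_, ?_⟩
  · intro c c'
    rw [hfiber c, hfiber c']
    exact hequit _ _ c.2 c'.2
  · -- acyclicity
    intro c
    rcases hgood (c : ℕ) c.2 with ⟨i0, hz⟩ | ⟨i0, i1, hne, h1, h3, hz⟩
    · apply noedge_acyclic
      rintro ⟨a, ha⟩ ⟨b, hb⟩ hadj
      simp only [Set.mem_setOf_eq] at ha hb
      have hai : a.1 = i0 := by
        by_contra hcon; exact hzero a c (hz a.1 hcon) ha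
      have hbi : b.1 = i0 := by
        by_contra hcon; exact hzero b c (hz b.1 hcon) hb
      have : a.1 ≠ b.1 := hadj
      rw [hai, hbi] at this; exact this rfl
    · obtain ⟨j0, hv0, hkey⟩ := hstar c i0 i1 h1 hz
      apply star_acyclic _ (⟨⟨i0, j0⟩, hv0⟩ : {v | f v = c})
      rintro ⟨a, ha⟩ ⟨b, hb⟩ hadj
      simp only [Set.mem_setOf_eq] at ha hb
      have hab : a.1 ≠ b.1 := hadj
      rcases hkey a ha with h | h
      · left; exact Subtype.ext h
      · rcases hkey b hb with h' | h'
        · right; exact Subtype.ext h'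
        · exact absurd (h.trans h'.symm) hab
  · -- degrees
    intro c v
    rcases hgood (c : ℕ) c.2 with ⟨i0, hz⟩ | ⟨i0, i1, hne, h1, h3, hz⟩
    · have hemp : (((K3 (4*k)).induce {v | f v = c}).neighborSet v) = ∅ := by
        ext w
        simp only [mem_neighborSet, Set.mem_empty_iff_false, iff_false]
        intro hadj
        obtain ⟨a, ha⟩ := v
        obtain ⟨b, hb⟩ := w
        simp only [Set.mem_setOf_eq] at ha hb
        have hai : a.1 = i0 := by
          by_contra hcon; exact hzero a c (hz a.1 hcon) ha
        have hbi : b.1 = i0 := by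
          by_contra hcon; exact hzero b c (hz b.1 hcon) hb
        have : a.1 ≠ b.1 := hadj
        rw [hai, hbi] at this; exact this rfl
      rw [hemp]
      simp
    · obtain ⟨j0, hv0, hkey⟩ := hstar c i0 i1 h1 hz
      by_cases hc : v = (⟨⟨i0, j0⟩, hv0⟩ : {v | f v = c})
      · -- center: inject neighbors into part-i1 fiber
        have hpart : ∀ w ∈ ((K3 (4*k)).induce {v | f v = c}).neighborSet v,
            (w : Σ _ : Fin 3, Fin (4*k)).1 = i1 := by
          intro w hw
          have hadj : ((K3 (4*k)).induce {v | f v = c}).Adj v w := hw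
          have hab : (v : Σ _ : Fin 3, Fin (4*k)).1 ≠ (w : Σ _ : Fin 3, Fin (4*k)).1 := hadj
          rcases hkey (w : Σ _ : Fin 3, Fin (4*k)) w.2 with h | h
          · exfalso; apply hab; rw [hc, h]
          · exact h
        have hle := Set.ncard_le_ncard_of_injOn
          (f := fun w : {v | f v = c} => (w : Σ _ : Fin 3, Fin (4*k)).2)
          (s := ((K3 (4*k)).induce {v | f v = c}).neighborSet v)
          (t := {j : Fin (4*k) | loc (g i1) (j : ℕ) = (c : ℕ)})
          ?_ ?_ (Set.toFinite _)
        · rw [hS1 c i1] at hle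
          omega
        · intro w hw
          have hloc := (hmem (w : Σ _ : Fin 3, Fin (4*k)) c).1 w.2
          rw [hpart w hw] at hloc
          exact hloc
        · intro w hw w' hw' hsnd
          apply Subtype.ext
          apply Sigma.ext ((hpart w hw).trans (hpart w' hw').symm) (heq_of_eq hsnd)
      · -- leaf: neighbors ⊆ {center}
        have hsub : ((K3 (4*k)).induce {v | f v = c}).neighborSet v
            ⊆ {(⟨⟨i0, j0⟩, hv0⟩ : {v | f v = c})} := by
          intro w hw
          have hadj : ((K3 (4*k)).induce {v | f v = c}).Adj v w := hw
          have hab : (v : Σ _ : Fin 3, Fin (4*k)).1 ≠ (w : Σ _ : Fin 3, Fin (4*k)).1 := hadj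
          have hv1 : (v : Σ _ : Fin 3, Fin (4*k)).1 = i1 := by
            rcases hkey v v.2 with h | h
            · exact absurd (Subtype.ext h) hc
            · exact h
          rcases hkey w w.2 with h | h
          · simp only [Set.mem_singleton_iff]
            exact Subtype.ext h
          · exact absurd (hv1.trans h.symm) hab
        calc _ ≤ _ := Set.ncard_le_ncard hsub (Set.toFinite _)
        _ ≤ 3 := by rw [Set.ncard_singleton]; omega

lemma lemA' (k t s : ℕ) (hk : 0 < k) (L : List (ℕ × (ℕ × ℕ × ℕ)))
    (hlen : lenSum L = t)
    (hc1 : (L.map (fun p => p.1 * p.2.1)).sum = 4*k)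
    (hc2 : (L.map (fun p => p.1 * p.2.2.1)).sum = 4*k)
    (hc3 : (L.map (fun p => p.1 * p.2.2.2)).sum = 4*k)
    (hval : ∀ p ∈ L, p.1 ≠ 0 → Good p.2 ∧ s ≤ p.2.1 + p.2.2.1 + p.2.2.2 ∧
      p.2.1 + p.2.2.1 + p.2.2.2 ≤ s + 1) :
    EqTreeColorable (K3 (4*k)) t 3 := by
  apply lemA k t hk (fun i c => ![(pfun L c).1, (pfun L c).2.1, (pfun L c).2.2] i)
  · intro i
    fin_cases i
    · show cum (fun c => (pfun L c).1) t = 4*k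
      unfold cum
      rw [← hlen, sum_pfun (fun p => p.1) L]
      exact hc1
    · show cum (fun c => (pfun L c).2.1) t = 4*k
      unfold cum
      rw [← hlen, sum_pfun (fun p => p.2.1) L]
      exact hc2
    · show cum (fun c => (pfun L c).2.2) t = 4*k
      unfold cum
      rw [← hlen, sum_pfun (fun p => p.2.2) L]
      exact hc3
  · intro c c' hc hc'
    obtain ⟨p, hpL, hp0, hpv⟩ := pfun_mem L c (by omega)
    obtain ⟨q, hqL, hq0, hqv⟩ := pfun_mem L c' (by omega)
    have h1 := (hval p hpL hp0).2
    have h2 := (hval q hqL hq0).2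
    simp only [Matrix.cons_val_zero, Matrix.cons_val_one, Matrix.head_cons,
      Matrix.cons_val_two, Matrix.tail_cons, hpv, hqv]
    omega
  · intro c hc
    obtain ⟨p, hpL, hp0, hpv⟩ := pfun_mem L c (by omega)
    have hg := (hval p hpL hp0).1
    have := good_sem p.2.1 p.2.2.1 p.2.2.2 (by
      have : (p.2.1, p.2.2.1, p.2.2.2) = p.2 := rfl
      rw [this]; exact hg)
    rw [hpv]
    exact this

lemma lemW (k t s r0 r1 r2 n0 n1 n2 : ℕ) (hk : 0 < k)
    (h0 : s*n0 + r0 = 4*k) (h0' : r0 ≤ n0)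
    (h1 : s*n1 + r1 = 4*k) (h1' : r1 ≤ n1)
    (h2 : s*n2 + r2 = 4*k) (h2' : r2 ≤ n2)
    (hn : n0 + n1 + n2 = t) :
    EqTreeColorable (K3 (4*k)) t 3 := by
  obtain ⟨d0, rfl⟩ : ∃ d, n0 = r0 + d := ⟨n0 - r0, by omega⟩
  obtain ⟨d1, rfl⟩ : ∃ d, n1 = r1 + d := ⟨n1 - r1, by omega⟩
  obtain ⟨d2, rfl⟩ : ∃ d, n2 = r2 + d := ⟨n2 - r2, by omega⟩
  apply lemA' k t s hk
    [(r0,(s+1,0,0)), (d0,(s,0,0)), (r1,(0,s+1,0)), (d1,(0,s,0)), (r2,(0,0,s+1)), (d2,(0,0,s))]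
  · simp [lenSum]; omega
  · simp only [List.map_cons, List.map_nil, List.sum_cons, List.sum_nil]
    rw [← h0]; ring
  · simp only [List.map_cons, List.map_nil, List.sum_cons, List.sum_nil]
    rw [← h1]; ring
  · simp only [List.map_cons, List.map_nil, List.sum_cons, List.sum_nil]
    rw [← h2]; ring
  · intro p hp hp0
    fin_cases hp <;> simp [Good] <;> omega

lemma main (k t : ℕ) (hk : 0 < k) (ht : 3*k ≤ t + 3*(k/5)) :
    EqTreeColorable (K3 (4*k)) t 3 := by
  have htpos : 0 < t := by omega
  obtain ⟨s, r, hdm, hrt⟩ : ∃ s r, t * s + r = 12*k ∧ r < t :=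
    ⟨12*k/t, 12*k%t, Nat.div_add_mod _ _, Nat.mod_lt _ htpos⟩
  have h5t : 12*k ≤ 5*t := by omega
  have hs6 : s < 6 := by
    by_contra hcon
    push_neg at hcon
    have : t*6 ≤ t*s := Nat.mul_le_mul_left t hcon
    omega
  have hscase : s = 0 ∨ s = 1 ∨ s = 2 ∨ s = 3 ∨ s = 4 ∨ s = 5 := by omega
  rcases hscase with h|h|h|h|h|h <;> subst h
  · -- s = 0 : t > 12k
    apply lemA' k t 0 hk
      [(4*k,(1,0,0)), (4*k,(0,1,0)), (4*k,(0,0,1)), (t-12*k,(0,0,0))]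
    · simp [lenSum]; omega
    · simp; try omega
    · simp; try omega
    · simp; try omega
    · intro p hp hp0
      fin_cases hp <;> simp [Good]
  · -- s = 1
    obtain ⟨r0, r1, r2, hq1, hq2, hq3, hq4⟩ :
        ∃ r0 r1 r2, r0 + r1 + r2 = r ∧ r0 ≤ 2*k ∧ r1 ≤ 2*k ∧ r2 ≤ 2*k :=
      ⟨min r (2*k), min (r - min r (2*k)) (2*k), r - min r (2*k) - min (r - min r (2*k)) (2*k),
        by omega, by omega, by omega, by omega⟩
    exact lemW k t 1 r0 r1 r2 (4*k - r0) (4*k - r1) (4*k - r2)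
      hk (by omega) (by omega) (by omega) (by omega) (by omega) (by omega) (by omega)
  · -- s = 2
    by_cases hbad : k % 3 = 1 ∧ t = 4*k+1
    · obtain ⟨x, hx⟩ : ∃ x, 3*x + 1 = 4*k := ⟨(4*k-1)/3, by omega⟩
      apply lemA' k t 2 hk
        [(x,(3,0,0)), (1,(1,1,0)), (x,(0,3,0)), (2,(0,0,2)), (x-1,(0,0,3))]
      · simp [lenSum]; omega
      · simp; try omega
      · simp; try omega
      · simp; try omega
      · intro p hp hp0
        fin_cases hp <;> simp [Good] <;> omega
    · have hM : r ≤ 6*((2*k)/3) := by omega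
      obtain ⟨r0, r1, r2, hq1, hq2, hq3, hq4, hq5, hq6, hq7⟩ :
          ∃ r0 r1 r2, r0 + r1 + r2 = r ∧ 3*r0 ≤ 4*k ∧ 3*r1 ≤ 4*k ∧ 3*r2 ≤ 4*k ∧
            r0 % 2 = 0 ∧ r1 % 2 = 0 ∧ r2 % 2 = 0 := by
        refine ⟨min r (2*((2*k)/3)), min (r - min r (2*((2*k)/3))) (2*((2*k)/3)),
          r - min r (2*((2*k)/3)) - min (r - min r (2*((2*k)/3))) (2*((2*k)/3)),
          by omega, by omega, by omega, by omega, by omega, by omega, by omega⟩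
      exact lemW k t 2 r0 r1 r2 ((4*k - r0)/2) ((4*k - r1)/2) ((4*k - r2)/2)
        hk (by omega) (by omega) (by omega) (by omega) (by omega) (by omega) (by omega)
  · -- s = 3
    by_cases hbad1 : r = 0 ∧ k % 3 = 1
    · obtain ⟨x, hx⟩ : ∃ x, 3*x + 1 = 4*k := ⟨(4*k-1)/3, by omega⟩
      apply lemA' k t 3 hk
        [(x,(3,0,0)), (1,(1,2,0)), (x-1,(0,3,0)), (1,(0,2,1)), (x,(0,0,3))]
      · simp [lenSum]; omega
      · simp; try omega
      · simp; try omega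
      · simp; try omega
      · intro p hp hp0
        fin_cases hp <;> simp [Good] <;> omega
    · by_cases hbad2 : r = 0 ∧ k % 3 = 2
      · obtain ⟨x, hx⟩ : ∃ x, 3*x + 2 = 4*k := ⟨(4*k-2)/3, by omega⟩
        apply lemA' k t 3 hk
          [(x,(3,0,0)), (1,(2,1,0)), (x,(0,3,0)), (1,(0,1,2)), (x,(0,0,3))]
        · simp [lenSum]; omega
        · simp; try omega
        · simp; try omega
        · simp; try omega
        · intro p hp hp0
          fin_cases hp <;> simp [Good] <;> omega
      · by_cases hbad3 : r = 3 ∧ k % 3 = 2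
        · obtain ⟨x, hx⟩ : ∃ x, 3*x + 5 = 4*k := ⟨(4*k-5)/3, by omega⟩
          apply lemA' k t 3 hk
            [(1,(4,0,0)), (x,(3,0,0)), (1,(1,3,0)), (1,(0,4,0)), (x-1,(0,3,0)),
             (1,(0,1,2)), (x+1,(0,0,3))]
          · simp [lenSum]; omega
          · simp; try omega
          · simp; try omega
          · simp; try omega
          · intro p hp hp0
            fin_cases hp <;> simp [Good] <;> omega
        · -- good case
          have hrho : 3*(k % 3) ≤ r := by omega
          obtain ⟨r0, r1, r2, hq1, hq2, hq3, hq4, hq5, hq6, hq7⟩ :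
              ∃ r0 r1 r2, r0 + r1 + r2 = r ∧ r0 ≤ k ∧ r1 ≤ k ∧ r2 ≤ k ∧
                r0 % 3 = k % 3 ∧ r1 % 3 = k % 3 ∧ r2 % 3 = k % 3 := by
            refine ⟨k % 3 + min (r - 3*(k % 3)) (k - k % 3),
              k % 3 + min (r - 3*(k % 3) - min (r - 3*(k % 3)) (k - k % 3)) (k - k % 3),
              r - (k % 3 + min (r - 3*(k % 3)) (k - k % 3))
                - (k % 3 + min (r - 3*(k % 3) - min (r - 3*(k % 3)) (k - k % 3)) (k - k % 3)),
              by omega, by omega, by omega, by omega, by omega, by omega, by omega⟩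
          exact lemW k t 3 r0 r1 r2 ((4*k - r0)/3) ((4*k - r1)/3) ((4*k - r2)/3)
            hk (by omega) (by omega) (by omega) (by omega) (by omega) (by omega) (by omega)
  · -- s = 4
    have hA : r ≤ 12*(k/5) := by omega
    have hr4 : r % 4 = 0 := by omega
    obtain ⟨a0, a1, a2, hq1, hq2, hq3, hq4⟩ :
        ∃ a0 a1 a2, a0 + a1 + a2 = r/4 ∧ 5*a0 ≤ k ∧ 5*a1 ≤ k ∧ 5*a2 ≤ k := by
      refine ⟨min (r/4) (k/5), min (r/4 - min (r/4) (k/5)) (k/5),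
        r/4 - min (r/4) (k/5) - min (r/4 - min (r/4) (k/5)) (k/5),
        by omega, by omega, by omega, by omega⟩
    exact lemW k t 4 (4*a0) (4*a1) (4*a2) (k - a0) (k - a1) (k - a2)
      hk (by omega) (by omega) (by omega) (by omega) (by omega) (by omega) (by omega)
  · -- s = 5
    have hr0 : r = 0 := by omega
    have hdiv : k % 5 = 0 := by omega
    exact lemW k t 5 0 0 0 ((4*k)/5) ((4*k)/5) ((4*k)/5)
      hk (by omega) (by omega) (by omega) (by omega) (by omega) (by omega) (by omega)

theorem stmt4 (k m : ℕ) (hk : 5 * m ≤ k) (hk0 : k ≠ 0) :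
    vaStrong (K3 (4 * k)) 3 ≤ 3 * k - 3 * m := by
  apply Nat.sInf_le
  intro t' ht'
  exact main k t' (by omega) (by omega)
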